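/- Let n ≥ 2, let C be an n-dimensional cone of aperture ψ in ℝ^{n+1}, and let r : I → ℝ^{n+1}∖{0} be a non-colliding twice continuously differentiable curve on an open interval I. Then r is a geodesic on C if and only if there exists a 2-dimensional cone D of aperture ψ with D ⊆ C such that r is a geodesic on D. -/

import Mathlib

open scoped InnerProductSpace

open Set

section Aux

variable {F : Type*} [NormedAddCommGroup F] [InnerProductSpace ℝ F]

lemma aux_deriv_inner_zero {I : Set ℝ} (hI : IsOpen I) {g : ℝ → F} {g' : ℝ → F} {e : F}
    (hg : ∀ t ∈ I, HasDerivAt g (g' t) t)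
    (h0 : ∀ t ∈ I, ⟪g t, e⟫_ℝ = 0) {t : ℝ} (ht : t ∈ I) :
    ⟪g' t, e⟫_ℝ = 0 := by
  have h1 : HasDerivAt (fun s => ⟪g s, e⟫_ℝ) (⟪g t, (0:F)⟫_ℝ + ⟪g' t, e⟫_ℝ) t :=
    (hg t ht).inner ℝ (hasDerivAt_const t e)
  simp only [inner_zero_right, zero_add] at h1
  have h2 : HasDerivAt (fun s => ⟪g s, e⟫_ℝ) 0 t := by
    have heq : (fun s => ⟪g s, e⟫_ℝ) =ᶠ[nhds t] fun _ => (0:ℝ) := by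
      filter_upwards [hI.mem_nhds ht] with s hs using h0 s hs
    exact (hasDerivAt_const t (0:ℝ)).congr_of_eventuallyEq heq
  exact h1.unique h2

lemma aux_mem_of_inner_orthogonal [FiniteDimensional ℝ F] (W : Submodule ℝ F) (x : F)
    (h : ∀ e ∈ Wᗮ, ⟪x, e⟫_ℝ = 0) : x ∈ W := by
  rw [← Submodule.orthogonal_orthogonal W, Submodule.mem_orthogonal]
  intro e he
  rw [real_inner_comm]
  exact h e he

lemma aux_ode_icc_zero {a b M : ℝ} {f f' f'' : ℝ → ℝ}
    (hab : a ≤ b)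
    (hf : ∀ t ∈ Icc a b, HasDerivAt f (f' t) t)
    (hf' : ∀ t ∈ Icc a b, HasDerivAt f' (f'' t) t)
    (hM : ∀ t ∈ Icc a b, |f'' t| ≤ M * |f t|)
    (h0 : f a = 0) (h0' : f' a = 0) : ∀ t ∈ Icc a b, f t = 0 := by
  set K : ℝ := max 1 |M| with hK
  have hK1 : (1:ℝ) ≤ K := le_max_left _ _
  have hKM : |M| ≤ K := le_max_right _ _
  set g : ℝ → ℝ × ℝ := fun t => (f t, f' t) with hg
  have hgd : ∀ t ∈ Icc a b, HasDerivAt g (f' t, f'' t) t := fun t ht =>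
    (hf t ht).prodMk (hf' t ht)
  have hcont : ContinuousOn g (Icc a b) := fun t ht =>
    ((hgd t ht).continuousAt).continuousWithinAt
  have hga : ‖g a‖ ≤ 0 := by
    simp [hg, h0, h0', Prod.norm_def]
  have hbound : ∀ t ∈ Ico a b, ‖((f' t, f'' t) : ℝ × ℝ)‖ ≤ K * ‖g t‖ + 0 := by
    intro t ht
    have ht' : t ∈ Icc a b := Ico_subset_Icc_self ht
    have h1 : ‖g t‖ = max |f t| |f' t| := by
      simp [hg, Prod.norm_def, Real.norm_eq_abs]
    rw [add_zero, Prod.norm_def]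
    simp only [Real.norm_eq_abs]
    have hgnn : 0 ≤ max |f t| |f' t| := le_max_of_le_left (abs_nonneg _)
    rw [h1]
    apply max_le
    · calc |f' t| ≤ max |f t| |f' t| := le_max_right _ _
        _ = 1 * max |f t| |f' t| := (one_mul _).symm
        _ ≤ K * max |f t| |f' t| := by
            apply mul_le_mul_of_nonneg_right hK1 hgnn
    · calc |f'' t| ≤ M * |f t| := hM t ht'
        _ ≤ |M| * |f t| := mul_le_mul_of_nonneg_right (le_abs_self M) (abs_nonneg _)
        _ ≤ K * max |f t| |f' t| := by
            apply mul_le_mul (le_trans hKM le_rfl) (le_max_left _ _) (abs_nonneg _)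
            linarith
  have hmain := norm_le_gronwallBound_of_norm_deriv_right_le hcont
    (fun t ht => (hgd t (Ico_subset_Icc_self ht)).hasDerivWithinAt) hga hbound
  intro t ht
  have h2 := hmain t ht
  rw [gronwallBound_ε0_δ0] at h2
  have hft : |f t| ≤ ‖g t‖ := by
    simp only [hg, Prod.norm_def, Real.norm_eq_abs]
    exact le_max_left _ _
  exact abs_nonpos_iff.mp (le_trans hft h2)

lemma aux_ode_linear_zero {I : Set ℝ} (hIo : IsOpen I) (hIc : I.OrdConnected)
    {f f' d : ℝ → ℝ}
    (hf : ∀ t ∈ I, HasDerivAt f (f' t) t)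
    (hf' : ∀ t ∈ I, HasDerivAt f' (d t * f t) t)
    (hd : ContinuousOn d I)
    {t₀ : ℝ} (ht₀ : t₀ ∈ I) (h0 : f t₀ = 0) (h0' : f' t₀ = 0) :
    ∀ t ∈ I, f t = 0 := by
  intro t ht
  rcases le_total t₀ t with hle | hle
  · have hJ : Icc t₀ t ⊆ I := hIc.out ht₀ ht
    obtain ⟨M, hM⟩ := isCompact_Icc.exists_bound_of_continuousOn (hd.mono hJ)
    have := aux_ode_icc_zero hle (fun s hs => hf s (hJ hs)) (fun s hs => hf' s (hJ hs))
      (fun s hs => by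
        rw [abs_mul]
        exact mul_le_mul_of_nonneg_right (by simpa using hM s hs) (abs_nonneg _))
      h0 h0'
    exact this t (right_mem_Icc.mpr hle)
  · have hJ : Icc t t₀ ⊆ I := hIc.out ht ht₀
    obtain ⟨M, hM⟩ := isCompact_Icc.exists_bound_of_continuousOn (hd.mono hJ)
    set c : ℝ := t₀ + t with hc
    have hmem : ∀ s ∈ Icc t t₀, c - s ∈ Icc t t₀ := by
      intro s hs
      constructor <;> [linarith [hs.2]; linarith [hs.1]]
    set F : ℝ → ℝ := fun s => f (c - s) with hF
    set F' : ℝ → ℝ := fun s => -f' (c - s) with hF'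
    have hFd : ∀ s ∈ Icc t t₀, HasDerivAt F (F' s) s := by
      intro s hs
      have h1 : HasDerivAt (fun x : ℝ => c - x) (-1) s := by
        simpa using (hasDerivAt_id s).const_sub c
      have := (hf (c - s) (hJ (hmem s hs))).comp s h1
      simpa [hF, hF', Function.comp_def] using this
    have hFd' : ∀ s ∈ Icc t t₀, HasDerivAt F' (d (c - s) * f (c - s)) s := by
      intro s hs
      have h1 : HasDerivAt (fun x : ℝ => c - x) (-1) s := by
        simpa using (hasDerivAt_id s).const_sub c
      have h2 := ((hf' (c - s) (hJ (hmem s hs))).comp s h1).neg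
      simpa [hF', Function.comp_def, Pi.neg_def] using h2
    have := aux_ode_icc_zero hle hFd hFd'
      (fun s hs => by
        rw [abs_mul]
        exact mul_le_mul_of_nonneg_right
          (by simpa using hM (c - s) (hmem s hs)) (abs_nonneg _))
      (by simp [hF, hc, h0]) (by simp [hF', hc, h0'])
    have h3 := this t₀ (right_mem_Icc.mpr hle)
    simpa [hF, hc] using h3

end Aux


/-- `IsCone n k C U a` : `C` is the `k`-dimensional cone in `ℝⁿ` generated by the affine
plane `P = a + U`, where `U` is a `k`-dimensional linear subspace, `a ∈ U^⊥`, and `P`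
meets the unit sphere in more than one point; `C = {x ≠ 0 : x/|x| ∈ P}`. -/
def IsCone (n k : ℕ) (C : Set (EuclideanSpace ℝ (Fin n)))
    (U : Submodule ℝ (EuclideanSpace ℝ (Fin n))) (a : EuclideanSpace ℝ (Fin n)) : Prop :=
  Module.finrank ℝ U = k ∧ a ∈ Uᗮ ∧
  (∃ x y : EuclideanSpace ℝ (Fin n), x ≠ y ∧ ‖x‖ = 1 ∧ ‖y‖ = 1 ∧ x - a ∈ U ∧ y - a ∈ U) ∧
  C = {x | x ≠ 0 ∧ ‖x‖⁻¹ • x - a ∈ U}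

/-- `C` is a `k`-dimensional cone of aperture `ψ` in `ℝⁿ`: `cos ψ = |a|`, `ψ ∈ (0, π/2]`. -/
def IsConeWithAperture (n k : ℕ) (C : Set (EuclideanSpace ℝ (Fin n)))
    (U : Submodule ℝ (EuclideanSpace ℝ (Fin n))) (a : EuclideanSpace ℝ (Fin n))
    (ψ : ℝ) : Prop :=
  IsCone n k C U a ∧ ψ ∈ Set.Ioc 0 (Real.pi / 2) ∧ Real.cos ψ = ‖a‖

/-- A curve `r` (with second derivative `r''`) is a geodesic on the cone `C` generated by
`a + U` : it lies on `C` and its acceleration is orthogonal to the tangent space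
`span{r(t)} ⊕ (U ∩ r(t)^⊥)` of `C` at `r(t)`, for every `t ∈ I`. -/
def IsGeodesicOn (n : ℕ) (I : Set ℝ) (r r'' : ℝ → EuclideanSpace ℝ (Fin n))
    (C : Set (EuclideanSpace ℝ (Fin n)))
    (U : Submodule ℝ (EuclideanSpace ℝ (Fin n))) : Prop :=
  (∀ t ∈ I, r t ∈ C) ∧
  ∀ t ∈ I, ⟪r'' t, r t⟫_ℝ = 0 ∧
    ∀ w ∈ U, ⟪w, r t⟫_ℝ = 0 → ⟪r'' t, w⟫_ℝ = 0

set_option maxHeartbeats 3000000 in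
/-- Let `n ≥ 2`, let `C` be an `n`-dimensional cone of aperture `ψ` in
`ℝ^{n+1}`, and let `r : I → ℝ^{n+1} ∖ {0}` be a non-colliding twice continuously
differentiable curve on an open interval `I`. Then `r` is a geodesic on `C` if and only
if there is a `2`-dimensional cone `D ⊆ C` of aperture `ψ` on which `r` is a geodesic. -/
theorem geodesic_on_cone_iff_two_dim
    (n : ℕ) (hn : 2 ≤ n)
    (I : Set ℝ) (hIopen : IsOpen I) (hIconn : I.OrdConnected)
    (r r' r'' : ℝ → EuclideanSpace ℝ (Fin (n + 1)))
    (hne : ∀ t ∈ I, r t ≠ 0)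
    (hd1 : ∀ t ∈ I, HasDerivAt r (r' t) t)
    (hd2 : ∀ t ∈ I, HasDerivAt r' (r'' t) t)
    (hC2 : ContinuousOn r'' I)
    (hnoncoll : ¬ (∀ t ∈ I, ∃ c : ℝ, r' t = c • r t))
    (C : Set (EuclideanSpace ℝ (Fin (n + 1))))
    (U : Submodule ℝ (EuclideanSpace ℝ (Fin (n + 1))))
    (a : EuclideanSpace ℝ (Fin (n + 1))) (ψ : ℝ)
    (hC : IsConeWithAperture (n + 1) n C U a ψ) :
    IsGeodesicOn (n + 1) I r r'' C U ↔
      ∃ (D : Set (EuclideanSpace ℝ (Fin (n + 1))))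
        (V : Submodule ℝ (EuclideanSpace ℝ (Fin (n + 1))))
        (b : EuclideanSpace ℝ (Fin (n + 1))),
        IsConeWithAperture (n + 1) 2 D V b ψ ∧ D ⊆ C ∧
        IsGeodesicOn (n + 1) I r r'' D V := by
  obtain ⟨⟨hrank, haU, hpts, hCeq⟩, hψ, hcos⟩ := hC
  have haU' : ∀ v ∈ U, ⟪v, a⟫_ℝ = 0 := (Submodule.mem_orthogonal U a).mp haU
  have ha_lt : ‖a‖ < 1 := by
    rw [← hcos, ← Real.cos_zero]
    exact Real.cos_lt_cos_of_nonneg_of_le_pi le_rfl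
      (hψ.2.trans (by linarith [Real.pi_pos])) hψ.1
  have ha_nonneg : 0 ≤ ‖a‖ := norm_nonneg a
  have ha2 : 0 < 1 - ‖a‖^2 := by nlinarith
  have hCmem : ∀ x, x ∈ C ↔ (x ≠ 0 ∧ ‖x‖⁻¹ • x - a ∈ U) := by
    intro x; rw [hCeq]; rfl
  constructor
  · intro hgeo
    push_neg at hnoncoll
    obtain ⟨t₀, ht₀I, ht₀⟩ := hnoncoll
    set u : ℝ → EuclideanSpace ℝ (Fin (n+1)) := fun t => r t - ‖r t‖ • a with hu
    have hu_mem : ∀ t ∈ I, u t ∈ U := by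
      intro t ht
      have h := ((hCmem (r t)).mp (hgeo.1 t ht)).2
      have h1 : u t = ‖r t‖ • (‖r t‖⁻¹ • r t - a) := by
        simp only [hu]
        rw [smul_sub, smul_smul, mul_inv_cancel₀ (norm_ne_zero_iff.mpr (hne t ht)), one_smul]
      rw [h1]
      exact Submodule.smul_mem U _ h
    have hua : ∀ t ∈ I, ⟪u t, a⟫_ℝ = 0 := fun t ht => haU' _ (hu_mem t ht)
    have hr_dec : ∀ t, r t = u t + ‖r t‖ • a := by
      intro t; simp only [hu]; abel
    have hra : ∀ t ∈ I, ⟪r t, a⟫_ℝ = ‖r t‖ * ‖a‖^2 := by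
      intro t ht
      conv_lhs => rw [hr_dec t]
      rw [inner_add_left, real_inner_smul_left, hua t ht,
        real_inner_self_eq_norm_sq, zero_add]
    have hrw_u : ∀ t ∈ I, ∀ w ∈ U, ⟪r t, w⟫_ℝ = ⟪u t, w⟫_ℝ := by
      intro t ht w hw
      have e1 : ⟪a, w⟫_ℝ = 0 := by rw [real_inner_comm]; exact haU' _ hw
      conv_lhs => rw [hr_dec t]
      rw [inner_add_left, real_inner_smul_left, e1]; ring
    have hunorm : ∀ t ∈ I, ‖u t‖^2 = ‖r t‖^2 * (1 - ‖a‖^2) := by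
      intro t ht
      simp only [hu]
      rw [norm_sub_sq_real, real_inner_smul_right, hra t ht, norm_smul,
        Real.norm_eq_abs, abs_of_nonneg (norm_nonneg (r t)), mul_pow]
      ring
    have hu_pos : ∀ t ∈ I, 0 < ‖u t‖^2 := by
      intro t ht
      rw [hunorm t ht]
      have h0 : 0 < ‖r t‖ := norm_pos_iff.mpr (hne t ht)
      exact mul_pos (by positivity) ha2
    have hu_ne : ∀ t ∈ I, u t ≠ 0 := by
      intro t ht h
      have := hu_pos t ht
      rw [h] at this
      simp at this
    set d : ℝ → ℝ := fun t => ⟪r'' t, u t⟫_ℝ / ‖u t‖^2 with hd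
    have hkey : ∀ t ∈ I, ∀ w ∈ U, ⟪r'' t, w⟫_ℝ = d t * ⟪r t, w⟫_ℝ := by
      intro t ht w hw
      have hune : ‖u t‖^2 ≠ 0 := ne_of_gt (hu_pos t ht)
      set κ : ℝ := ⟪w, u t⟫_ℝ / ‖u t‖^2 with hκ
      have hw₂U : w - κ • u t ∈ U := sub_mem hw (Submodule.smul_mem U _ (hu_mem t ht))
      have hw₂r : ⟪w - κ • u t, r t⟫_ℝ = 0 := by
        rw [real_inner_comm, hrw_u t ht _ hw₂U, inner_sub_right,
          real_inner_smul_right, real_inner_self_eq_norm_sq, hκ,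
          real_inner_comm (u t) w]
        field_simp [norm_ne_zero_iff.mpr (hu_ne t ht)]
        ring
      have h0 := (hgeo.2 t ht).2 _ hw₂U hw₂r
      have h1 : ⟪r'' t, w⟫_ℝ = κ * ⟪r'' t, u t⟫_ℝ := by
        rw [inner_sub_right, real_inner_smul_right, sub_eq_zero] at h0
        exact h0
      rw [h1, hrw_u t ht w hw, hd, hκ, real_inner_comm (u t) w]
      simp only []
      ring
    have hr_cont : ContinuousOn r I := fun t ht => (hd1 t ht).continuousAt.continuousWithinAt
    have hu_cont : ContinuousOn u I := by
      simp only [hu]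
      exact hr_cont.sub ((hr_cont.norm).smul continuousOn_const)
    have hd_cont : ContinuousOn d I := by
      simp only [hd]
      exact ContinuousOn.div (hC2.inner hu_cont) ((hu_cont.norm).pow 2)
        (fun t ht => ne_of_gt (hu_pos t ht))
    have hrW' : ∀ t ∈ I, r t ∈ U ⊔ (ℝ ∙ a) := by
      intro t ht
      rw [hr_dec t]
      exact add_mem (Submodule.mem_sup_left (hu_mem t ht))
        (Submodule.mem_sup_right (Submodule.mem_span_singleton.mpr ⟨‖r t‖, rfl⟩))
    have hr'W' : r' t₀ ∈ U ⊔ (ℝ ∙ a) := by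
      apply aux_mem_of_inner_orthogonal
      intro e he
      exact aux_deriv_inner_zero hIopen hd1
        (fun s hs => (Submodule.mem_orthogonal _ e).mp he (r s) (hrW' s hs)) ht₀I
    obtain ⟨z, hzU, q, hqa, hzq⟩ := Submodule.mem_sup.mp hr'W'
    obtain ⟨c, rfl⟩ := Submodule.mem_span_singleton.mp hqa
    have hr'a : ⟪r' t₀, a⟫_ℝ = c * ‖a‖^2 := by
      rw [← hzq, inner_add_left, real_inner_smul_left, haU' z hzU,
        real_inner_self_eq_norm_sq, zero_add]
    have hρ : 0 < ‖r t₀‖ := norm_pos_iff.mpr (hne t₀ ht₀I)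
    have hli : LinearIndependent ℝ ![u t₀, z] := by
      rw [LinearIndependent.pair_iff' (hu_ne t₀ ht₀I)]
      intro k hk
      apply ht₀ k
      by_cases ha0 : a = 0
      · have h1 : r t₀ = u t₀ := by rw [hr_dec t₀, ha0, smul_zero, add_zero]
        rw [← hzq, ha0, smul_zero, add_zero, ← hk, h1]
      · have hA : (0:ℝ) < ‖a‖^2 := by
          have := norm_pos_iff.mpr ha0
          positivity
        have hφ : HasDerivAt (fun t => ⟪r t, r t⟫_ℝ) (2 * ⟪r t₀, r' t₀⟫_ℝ) t₀ := by
          have h := (hd1 t₀ ht₀I).inner ℝ (hd1 t₀ ht₀I)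
          have e : ⟪r t₀, r' t₀⟫_ℝ + ⟪r' t₀, r t₀⟫_ℝ = 2 * ⟪r t₀, r' t₀⟫_ℝ := by
            rw [real_inner_comm (r' t₀)]; ring
          rw [e] at h; exact h
        have hσ : HasDerivAt (fun t => ⟪r t, a⟫_ℝ) (c * ‖a‖^2) t₀ := by
          have h := (hd1 t₀ ht₀I).inner ℝ (hasDerivAt_const t₀ a)
          simp only [inner_zero_right, zero_add, add_zero] at h
          rwa [hr'a] at h
        have h1 : HasDerivAt (fun t => ⟪r t, a⟫_ℝ^2)
            (2 * (‖r t₀‖ * ‖a‖^2) * (c * ‖a‖^2)) t₀ := by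
          have h := hσ.pow 2
          have e : ((2:ℕ):ℝ) * ⟪r t₀, a⟫_ℝ^(2-1) * (c * ‖a‖^2)
              = 2 * (‖r t₀‖ * ‖a‖^2) * (c * ‖a‖^2) := by
            rw [hra t₀ ht₀I]; push_cast; ring
          rw [e] at h
          exact h
        have h2 : HasDerivAt (fun t => ⟪r t, r t⟫_ℝ * (‖a‖^2)^2)
            (2 * ⟪r t₀, r' t₀⟫_ℝ * (‖a‖^2)^2) t₀ := hφ.mul_const _
        have heq : (fun t => ⟪r t, r t⟫_ℝ * (‖a‖^2)^2) =ᶠ[nhds t₀]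
            (fun t => ⟪r t, a⟫_ℝ^2) := by
          filter_upwards [hIopen.mem_nhds ht₀I] with s hs
          rw [hra s hs, real_inner_self_eq_norm_sq]; ring
        have h3 : 2 * ⟪r t₀, r' t₀⟫_ℝ * (‖a‖^2)^2
            = 2 * (‖r t₀‖ * ‖a‖^2) * (c * ‖a‖^2) :=
          (h2.congr_of_eventuallyEq heq.symm).unique h1
        have hcm : ‖r t₀‖ * c = ⟪r t₀, r' t₀⟫_ℝ := by
          have h4 : (⟪r t₀, r' t₀⟫_ℝ - ‖r t₀‖ * c) * (2 * (‖a‖^2)^2) = 0 := by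
            linear_combination h3
          rcases mul_eq_zero.mp h4 with h5 | h5
          · linarith
          · exfalso
            have : (0:ℝ) < 2 * (‖a‖^2)^2 := by positivity
            linarith
        have hm : ⟪r t₀, r' t₀⟫_ℝ
            = k * (‖r t₀‖^2 * (1 - ‖a‖^2)) + ‖r t₀‖ * c * ‖a‖^2 := by
          have e1 : ⟪r t₀, r' t₀⟫_ℝ = ⟪u t₀ + ‖r t₀‖ • a, k • u t₀ + c • a⟫_ℝ := by
            rw [← hr_dec t₀, hk, hzq]
          have i1 : ⟪u t₀, k • u t₀⟫_ℝ = k * (‖r t₀‖^2 * (1 - ‖a‖^2)) := by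
            rw [real_inner_smul_right, real_inner_self_eq_norm_sq, hunorm t₀ ht₀I]
          have i2 : ⟪u t₀, c • a⟫_ℝ = 0 := by
            rw [real_inner_smul_right, hua t₀ ht₀I, mul_zero]
          have i3 : ⟪‖r t₀‖ • a, k • u t₀⟫_ℝ = 0 := by
            have e3 : ⟪a, u t₀⟫_ℝ = 0 := by rw [real_inner_comm]; exact hua t₀ ht₀I
            rw [real_inner_smul_left, real_inner_smul_right, e3]
            ring
          have i4 : ⟪‖r t₀‖ • a, c • a⟫_ℝ = ‖r t₀‖ * c * ‖a‖^2 := by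
            rw [real_inner_smul_left, real_inner_smul_right,
              real_inner_self_eq_norm_sq]
            ring
          rw [e1, inner_add_left, inner_add_right, inner_add_right, i1, i2, i3, i4]
          ring
        have hmk : ⟪r t₀, r' t₀⟫_ℝ = k * ‖r t₀‖^2 := by
          have h5 : ⟪r t₀, r' t₀⟫_ℝ * (1 - ‖a‖^2) = k * ‖r t₀‖^2 * (1 - ‖a‖^2) := by
            linear_combination hm + ‖a‖^2 * hcm
          exact mul_right_cancel₀ (ne_of_gt ha2) h5
        have hc : c = k * ‖r t₀‖ := by
          have h5 : ‖r t₀‖ * c = ‖r t₀‖ * (k * ‖r t₀‖) := by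
            rw [hcm, hmk]; ring
          exact mul_left_cancel₀ (ne_of_gt hρ) h5
        rw [← hzq, ← hk, hc, hr_dec t₀, smul_add, smul_smul, ← hr_dec t₀]
    set V : Submodule ℝ (EuclideanSpace ℝ (Fin (n+1))) := Submodule.span ℝ {u t₀, z} with hV
    have huV0 : u t₀ ∈ V := Submodule.subset_span (Set.mem_insert _ _)
    have hzV : z ∈ V := Submodule.subset_span (Set.mem_insert_of_mem _ rfl)
    have hV2 : Module.finrank ℝ V = 2 := by
      have hr2 : Set.range ![u t₀, z] = {u t₀, z} := by
        ext x
        simp only [Matrix.range_cons, Matrix.range_empty, Set.union_empty,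
          Set.union_singleton, Set.mem_insert_iff, Set.mem_singleton_iff]
        tauto
      have h := finrank_span_eq_card hli
      rw [hr2] at h
      simpa using h
    have hVU : V ≤ U := by
      rw [hV, Submodule.span_le]
      intro x hx
      simp only [Set.mem_insert_iff, Set.mem_singleton_iff] at hx
      rcases hx with rfl | rfl
      exacts [hu_mem t₀ ht₀I, hzU]
    have haV : a ∈ Vᗮ := (Submodule.mem_orthogonal V a).mpr fun v hv => haU' v (hVU hv)
    have hODE : ∀ y, y ∈ U → (∀ v ∈ V, ⟪v, y⟫_ℝ = 0) → ∀ t ∈ I, ⟪r t, y⟫_ℝ = 0 := by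
      intro y hyU hyV
      have hf0 : ⟪r t₀, y⟫_ℝ = 0 := by
        rw [hrw_u t₀ ht₀I y hyU]
        exact hyV (u t₀) huV0
      have hf0' : ⟪r' t₀, y⟫_ℝ = 0 := by
        have e1 : ⟪a, y⟫_ℝ = 0 := by rw [real_inner_comm]; exact haU' y hyU
        rw [← hzq, inner_add_left, real_inner_smul_left, hyV z hzV, e1]; ring
      have hfd : ∀ s ∈ I, HasDerivAt (fun τ => ⟪r τ, y⟫_ℝ) (⟪r' s, y⟫_ℝ) s := by
        intro s hs
        have h := (hd1 s hs).inner ℝ (hasDerivAt_const s y)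
        simpa using h
      have hfd' : ∀ s ∈ I, HasDerivAt (fun τ => ⟪r' τ, y⟫_ℝ) (d s * ⟪r s, y⟫_ℝ) s := by
        intro s hs
        have h := (hd2 s hs).inner ℝ (hasDerivAt_const s y)
        simp only [inner_zero_right, zero_add, add_zero] at h
        rwa [hkey s hs y hyU] at h
      exact aux_ode_linear_zero hIopen hIconn hfd hfd' hd_cont ht₀I hf0 hf0'
    have huVmem : ∀ t ∈ I, u t ∈ V := by
      intro t ht
      set p : EuclideanSpace ℝ (Fin (n+1)) := (Submodule.orthogonalProjection V (u t) : EuclideanSpace ℝ (Fin (n+1))) with hp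
      have hpV : p ∈ V := by rw [hp]; exact Submodule.coe_mem _
      have hyV : u t - p ∈ Vᗮ := Submodule.sub_starProjection_mem_orthogonal (K := V) (u t)
      have hyU : u t - p ∈ U := sub_mem (hu_mem t ht) (hVU hpV)
      have h1 : ⟪r t, u t - p⟫_ℝ = 0 :=
        hODE _ hyU ((Submodule.mem_orthogonal V _).mp hyV) t ht
      have h2 : ⟪u t, u t - p⟫_ℝ = 0 := by rw [← hrw_u t ht _ hyU]; exact h1
      have h3 : ⟪p, u t - p⟫_ℝ = 0 := (Submodule.mem_orthogonal V _).mp hyV p hpV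
      have h4 : ⟪u t - p, u t - p⟫_ℝ = 0 := by rw [inner_sub_left, h2, h3]; ring
      have h5 : u t = p := by
        have := inner_self_eq_zero.mp h4
        rwa [sub_eq_zero] at this
      rw [h5]
      exact hpV
    refine ⟨{x | x ≠ 0 ∧ ‖x‖⁻¹ • x - a ∈ V}, V, a,
      ⟨⟨hV2, haV, ?_, rfl⟩, hψ, hcos⟩, ?_, ?_, ?_⟩
    · -- two points on the sphere
      have hu0 : u t₀ ≠ 0 := hu_ne t₀ ht₀I
      have hun0 : ‖u t₀‖ ≠ 0 := norm_ne_zero_iff.mpr hu0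
      set uh : EuclideanSpace ℝ (Fin (n+1)) := ‖u t₀‖⁻¹ • u t₀ with huh
      have huh1 : ‖uh‖ = 1 := by
        rw [huh, norm_smul, Real.norm_eq_abs, abs_of_nonneg (by positivity),
          inv_mul_cancel₀ hun0]
      have huhV : uh ∈ V := Submodule.smul_mem V _ huV0
      have hauh : ⟪a, uh⟫_ℝ = 0 := by rw [real_inner_comm]; exact haU' uh (hVU huhV)
      set s₀ : ℝ := Real.sqrt (1 - ‖a‖^2) with hs₀
      have hs₀2 : s₀^2 = 1 - ‖a‖^2 := Real.sq_sqrt (le_of_lt ha2)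
      have hs₀pos : 0 < s₀ := Real.sqrt_pos.mpr ha2
      refine ⟨a + s₀ • uh, a - s₀ • uh, ?_, ?_, ?_, ?_, ?_⟩
      · intro h
        have h2 : (a + s₀ • uh) - (a - s₀ • uh) = (2*s₀) • uh := by
          rw [two_mul, add_smul]; abel
        have h3 : (2*s₀) • uh = 0 := by rw [← h2, h, sub_self]
        rcases smul_eq_zero.mp h3 with h4 | h4
        · have : (0:ℝ) < 2*s₀ := by positivity
          linarith [this, h4.ge, h4.le]
        · rw [h4] at huh1; simp at huh1
      · have h2 : ‖a + s₀ • uh‖^2 = 1 := by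
          rw [norm_add_sq_real, real_inner_smul_right, hauh, norm_smul,
            Real.norm_eq_abs, abs_of_pos hs₀pos, huh1]
          linear_combination hs₀2
        rw [← Real.sqrt_sq (norm_nonneg _), h2, Real.sqrt_one]
      · have h2 : ‖a - s₀ • uh‖^2 = 1 := by
          rw [norm_sub_sq_real, real_inner_smul_right, hauh, norm_smul,
            Real.norm_eq_abs, abs_of_pos hs₀pos, huh1]
          linear_combination hs₀2
        rw [← Real.sqrt_sq (norm_nonneg _), h2, Real.sqrt_one]
      · have e : a + s₀ • uh - a = s₀ • uh := by abel
        rw [e]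
        exact Submodule.smul_mem V _ huhV
      · have e : a - s₀ • uh - a = -(s₀ • uh) := by abel
        rw [e]
        exact neg_mem (Submodule.smul_mem V _ huhV)
    · -- D ⊆ C
      intro x hx
      rw [hCmem]
      exact ⟨hx.1, hVU hx.2⟩
    · -- r lies on D
      intro t ht
      refine ⟨hne t ht, ?_⟩
      have h1 : ‖r t‖⁻¹ • r t - a = ‖r t‖⁻¹ • u t := by
        simp only [hu]
        rw [smul_sub, smul_smul, inv_mul_cancel₀ (norm_ne_zero_iff.mpr (hne t ht)),
          one_smul]
      rw [h1]
      exact Submodule.smul_mem V _ (huVmem t ht)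
    · -- geodesic equations on D
      exact fun t ht => ⟨(hgeo.2 t ht).1,
        fun w hw hwr => (hgeo.2 t ht).2 w (hVU hw) hwr⟩
  · rintro ⟨D, V, b, ⟨⟨hV2, hbV, -, hDeq⟩, -, hcosb⟩, hDC, hgeoD⟩
    have hDmem : ∀ x, x ∈ D ↔ (x ≠ 0 ∧ ‖x‖⁻¹ • x - b ∈ V) := by
      intro x; rw [hDeq]; rfl
    have hbV' : ∀ v ∈ V, ⟪v, b⟫_ℝ = 0 := (Submodule.mem_orthogonal V b).mp hbV
    have hnb : ‖b‖ = ‖a‖ := hcosb.symm.trans hcos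
    set s : ℝ := Real.sqrt (1 - ‖b‖^2) with hs
    have hs2 : s^2 = 1 - ‖b‖^2 := Real.sq_sqrt (by rw [hnb]; linarith)
    have hs_pos : 0 < s := Real.sqrt_pos.mpr (by rw [hnb]; linarith)
    have key : ∀ v ∈ V, ‖v‖ = s → b + v - a ∈ U := by
      intro v hv hnv
      have hx2 : ‖b + v‖^2 = 1 := by
        rw [norm_add_sq_real, real_inner_comm, hbV' v hv, hnv]
        nlinarith
      have hx1 : ‖b + v‖ = 1 := by
        rw [← Real.sqrt_sq (norm_nonneg (b + v)), hx2, Real.sqrt_one]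
      have hx0 : b + v ≠ 0 := by
        intro h; rw [h] at hx1; simp at hx1
      have hxD : b + v ∈ D := by
        rw [hDmem]
        refine ⟨hx0, ?_⟩
        rw [hx1]
        simpa using hv
      have hxC := (hCmem _).mp (hDC hxD)
      rw [hx1] at hxC
      simpa using hxC.2
    have hVU : V ≤ U := by
      intro v hv
      rcases eq_or_ne v 0 with rfl | hv0
      · exact zero_mem U
      · have hnv : ‖v‖ ≠ 0 := norm_ne_zero_iff.mpr hv0
        set v₁ := (s * ‖v‖⁻¹) • v with hv₁
        have hv₁V : v₁ ∈ V := Submodule.smul_mem V _ hv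
        have hnv₁ : ‖v₁‖ = s := by
          rw [hv₁, norm_smul, Real.norm_eq_abs, abs_of_pos
            (by positivity), mul_assoc, inv_mul_cancel₀ hnv, mul_one]
        have h1 := key v₁ hv₁V hnv₁
        have h2 := key (-v₁) (neg_mem hv₁V) (by rw [norm_neg]; exact hnv₁)
        have h3 : (b + v₁ - a) - (b + -v₁ - a) = (2:ℝ) • v₁ := by
          rw [two_smul]; abel
        have h4 : (2:ℝ) • v₁ ∈ U := h3 ▸ sub_mem h1 h2
        have h5 : v₁ ∈ U := by
          have := Submodule.smul_mem U (2:ℝ)⁻¹ h4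
          rwa [smul_smul, inv_mul_cancel₀ (two_ne_zero), one_smul] at this
        have h6 : v = (‖v‖ * s⁻¹) • v₁ := by
          rw [hv₁, smul_smul]
          rw [show ‖v‖ * s⁻¹ * (s * ‖v‖⁻¹) = (s⁻¹ * s) * (‖v‖ * ‖v‖⁻¹) by ring,
            inv_mul_cancel₀ (ne_of_gt hs_pos), mul_inv_cancel₀ hnv, one_mul, one_smul]
        rw [h6]
        exact Submodule.smul_mem U _ h5
    have hbaU : b - a ∈ U := by
      have hVbot : V ≠ ⊥ := by
        intro h
        rw [h] at hV2
        simp at hV2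
      obtain ⟨v, hvV, hv0⟩ := Submodule.exists_mem_ne_zero_of_ne_bot hVbot
      have hnv : ‖v‖ ≠ 0 := norm_ne_zero_iff.mpr hv0
      set v₁ := (s * ‖v‖⁻¹) • v with hv₁
      have hv₁V : v₁ ∈ V := Submodule.smul_mem V _ hvV
      have hnv₁ : ‖v₁‖ = s := by
        rw [hv₁, norm_smul, Real.norm_eq_abs, abs_of_pos
          (by positivity), mul_assoc, inv_mul_cancel₀ hnv, mul_one]
      have h1 := key v₁ hv₁V hnv₁
      have h2 : b - a = (b + v₁ - a) - v₁ := by abel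
      rw [h2]
      exact sub_mem h1 (hVU hv₁V)
    have hb_eq : b = a := by
      have h1 : ⟪b - a, a⟫_ℝ = 0 := haU' _ hbaU
      have h2 : ‖b‖^2 = ‖a‖^2 + ‖b - a‖^2 := by
        have h3 : ‖a + (b - a)‖^2 = ‖a‖^2 + 2*⟪a, b - a⟫_ℝ + ‖b - a‖^2 :=
          norm_add_sq_real a (b - a)
        have h4 : a + (b - a) = b := by abel
        rw [h4] at h3
        rw [real_inner_comm] at h1
        rw [h3, h1]; ring
      have h4 : ‖b - a‖^2 = 0 := by rw [hnb] at h2; linarith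
      have h5 : b - a = 0 := by
        rw [pow_eq_zero_iff (two_ne_zero)] at h4
        exact norm_eq_zero.mp h4
      exact sub_eq_zero.mp h5
    rw [hb_eq] at hDmem
    set W : Submodule ℝ (EuclideanSpace ℝ (Fin (n+1))) := (ℝ ∙ a) ⊔ V with hW
    have hrV : ∀ t ∈ I, r t - ‖r t‖ • a ∈ V := by
      intro t ht
      obtain ⟨h0, hp⟩ := (hDmem _).mp (hgeoD.1 t ht)
      have h1 : r t - ‖r t‖ • a = ‖r t‖ • (‖r t‖⁻¹ • r t - a) := by
        rw [smul_sub, smul_smul, mul_inv_cancel₀ (norm_ne_zero_iff.mpr h0), one_smul]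
      rw [h1]
      exact Submodule.smul_mem V _ hp
    have hrW : ∀ t ∈ I, r t ∈ W := by
      intro t ht
      have h1 : r t = ‖r t‖ • a + (r t - ‖r t‖ • a) := by abel
      rw [h1]
      exact add_mem (Submodule.mem_sup_left (Submodule.mem_span_singleton.mpr ⟨‖r t‖, rfl⟩))
        (Submodule.mem_sup_right (hrV t ht))
    have hrW0 : ∀ e ∈ Wᗮ, ∀ t ∈ I, ⟪r t, e⟫_ℝ = 0 := fun e he t ht =>
      (Submodule.mem_orthogonal W e).mp he (r t) (hrW t ht)
    have hr'W0 : ∀ e ∈ Wᗮ, ∀ t ∈ I, ⟪r' t, e⟫_ℝ = 0 := fun e he t ht =>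
      aux_deriv_inner_zero hIopen hd1 (hrW0 e he) ht
    have hr''W : ∀ t ∈ I, r'' t ∈ W := fun t ht =>
      aux_mem_of_inner_orthogonal W _ (fun e he =>
        aux_deriv_inner_zero hIopen hd2 (fun s hs => hr'W0 e he s hs) ht)
    refine ⟨fun t ht => hDC (hgeoD.1 t ht), fun t ht => ⟨(hgeoD.2 t ht).1, ?_⟩⟩
    intro w hwU hwr
    obtain ⟨p, hp, q, hq, hpq⟩ := Submodule.mem_sup.mp (hr''W t ht)
    obtain ⟨γ, rfl⟩ := Submodule.mem_span_singleton.mp hp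
    set wV : EuclideanSpace ℝ (Fin (n+1)) := (Submodule.orthogonalProjection V w : EuclideanSpace ℝ (Fin (n+1))) with hwV
    have hwVV : wV ∈ V := Submodule.coe_mem _
    have hw2 : w - wV ∈ Vᗮ := Submodule.sub_starProjection_mem_orthogonal (K := V) w
    have hw2U : w - wV ∈ U := sub_mem hwU (hVU hwVV)
    have hw2r : ⟪w - wV, r t⟫_ℝ = 0 := by
      have h1 : r t = ‖r t‖ • a + (r t - ‖r t‖ • a) := by abel
      rw [h1, inner_add_right, real_inner_smul_right, haU' _ hw2U,
        (Submodule.mem_orthogonal' V _).mp hw2 _ (hrV t ht)]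
      ring
    have hwVr : ⟪wV, r t⟫_ℝ = 0 := by
      have h1 : ⟪w, r t⟫_ℝ = ⟪wV, r t⟫_ℝ + ⟪w - wV, r t⟫_ℝ := by
        rw [← inner_add_left]; congr 1; abel
      rw [hwr, hw2r] at h1
      linarith
    have h1 : ⟪r'' t, wV⟫_ℝ = 0 := (hgeoD.2 t ht).2 wV hwVV hwVr
    have h2 : ⟪r'' t, w - wV⟫_ℝ = 0 := by
      have e1 : ⟪a, w - wV⟫_ℝ = 0 := by rw [real_inner_comm]; exact haU' _ hw2U
      have e2 : ⟪q, w - wV⟫_ℝ = 0 := (Submodule.mem_orthogonal V _).mp hw2 q hq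
      rw [← hpq, inner_add_left, real_inner_smul_left, e1, e2]; ring
    have h3 : ⟪r'' t, w⟫_ℝ = ⟪r'' t, wV⟫_ℝ + ⟪r'' t, w - wV⟫_ℝ := by
      rw [← inner_add_right]; congr 1; abel
    rw [h3, h1, h2, add_zero]
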